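/- Uniqueness of inversion for a two-layer generative model: let x = φ(W₂ x₁) where x₁ = ReLU(W₁ z*), φ is injective, s₁ = ‖x₁‖₀ < spark(W₂)/2, and subrank(W₁, s₁) = n₀. Then for any z with φ(W₂ ReLU(W₁ z)) = x and ‖ReLU(W₁ z)‖₀ ≤ s₁, we have z = z*. -/
import Mathlib


open Matrix MeasureTheory ProbabilityTheory

noncomputable def supp {m : ℕ} (x : Fin m → ℝ) : Finset (Fin m) :=
  (Set.toFinite {j | x j ≠ 0}).toFinset

noncomputable def norm0 {m : ℕ} (x : Fin m → ℝ) : ℕ := (supp x).card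

def rowSub {n m : ℕ} (W : Matrix (Fin n) (Fin m) ℝ) (S : Finset (Fin n)) :
    Matrix {i // i ∈ S} (Fin m) ℝ := fun i j => W i.1 j

noncomputable def spark {ι : Type*} [Fintype ι] {m : ℕ} (W : Matrix ι (Fin m) ℝ) : ℕ :=
  sInf ({m + 1} ∪ {k | ∃ x : Fin m → ℝ, x ≠ 0 ∧ W.mulVec x = 0 ∧ norm0 x = k})

noncomputable def subspark {n m : ℕ} (W : Matrix (Fin n) (Fin m) ℝ) (s : ℕ) : ℕ :=
  sInf {k | ∃ S : Finset (Fin n), S.card = s ∧ spark (rowSub W S) = k}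

noncomputable def subrank {n m : ℕ} (W : Matrix (Fin n) (Fin m) ℝ) (s : ℕ) : ℕ :=
  sInf {k | ∃ S : Finset (Fin n), S.card = s ∧ (rowSub W S).rank = k}

def vrelu {k : ℕ} (v : Fin k → ℝ) : Fin k → ℝ := fun i => max (v i) 0

noncomputable def lambdaMin {s : ℕ} (M : Matrix (Fin s) (Fin s) ℝ) : ℝ :=
  sInf {r : ℝ | ∃ v : Fin s → ℝ, v ≠ 0 ∧ M.mulVec v = r • v}

noncomputable def lambdaMax {s : ℕ} (M : Matrix (Fin s) (Fin s) ℝ) : ℝ :=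
  sSup {r : ℝ | ∃ v : Fin s → ℝ, v ≠ 0 ∧ M.mulVec v = r • v}

theorem two_layer_uniqueness {n n0 n1 : ℕ}
    (W1 : Matrix (Fin n1) (Fin n0) ℝ) (W2 : Matrix (Fin n) (Fin n1) ℝ)
    (φ : (Fin n → ℝ) → Fin n → ℝ) (hφ : Function.Injective φ) (zs : Fin n0 → ℝ)
    (hsp : 2 * norm0 (vrelu (W1.mulVec zs)) < spark W2)
    (hrk : subrank W1 (norm0 (vrelu (W1.mulVec zs))) = n0) :
    ∀ z : Fin n0 → ℝ,
      φ (W2.mulVec (vrelu (W1.mulVec z))) = φ (W2.mulVec (vrelu (W1.mulVec zs))) →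
      norm0 (vrelu (W1.mulVec z)) ≤ norm0 (vrelu (W1.mulVec zs)) → z = zs := by
  intro z hphi hle
  have h2 : W2.mulVec (vrelu (W1.mulVec z)) = W2.mulVec (vrelu (W1.mulVec zs)) := hφ hphi
  set y1 := vrelu (W1.mulVec z) with hy1
  set x1 := vrelu (W1.mulVec zs) with hx1
  -- Step 1: y1 = x1
  have hyx : y1 = x1 := by
    by_contra hne
    have hd0 : W2.mulVec (y1 - x1) = 0 := by
      rw [Matrix.mulVec_sub, h2, sub_self]
    have hsupp : supp (y1 - x1) ⊆ supp y1 ∪ supp x1 := by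
      intro j hj
      simp only [supp, Set.Finite.mem_toFinset, Set.mem_setOf_eq, Finset.mem_union] at *
      by_contra h
      push_neg at h
      simp [h.1, h.2, sub_eq_zero] at hj
    have hcard : norm0 (y1 - x1) ≤ norm0 y1 + norm0 x1 :=
      le_trans (Finset.card_le_card hsupp) (Finset.card_union_le _ _)
    have hsple : spark W2 ≤ norm0 (y1 - x1) :=
      Nat.sInf_le (Or.inr ⟨y1 - x1, sub_ne_zero.mpr hne, hd0, rfl⟩)
    omega
  -- Step 2: full rank on the support
  set S := supp x1 with hS
  have hrank : (rowSub W1 S).rank = n0 := by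
    have h1 : subrank W1 (norm0 x1) ≤ (rowSub W1 S).rank :=
      Nat.sInf_le ⟨S, rfl, rfl⟩
    have h2 : (rowSub W1 S).rank ≤ n0 := le_of_le_of_eq (Matrix.rank_le_card_width (rowSub W1 S)) (Fintype.card_fin n0)
    omega
  have hker : LinearMap.ker (rowSub W1 S).mulVecLin = ⊥ := by
    have hfr := LinearMap.finrank_range_add_finrank_ker (rowSub W1 S).mulVecLin
    rw [Module.finrank_pi] at hfr
    have : Module.finrank ℝ (LinearMap.ker (rowSub W1 S).mulVecLin) = 0 := by
      have : (rowSub W1 S).rank = Module.finrank ℝ (LinearMap.range (rowSub W1 S).mulVecLin) := rfl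
      simp [Fintype.card_fin] at hfr
      omega
    exact Submodule.finrank_eq_zero.mp this
  -- Step 3: equality on the support rows
  have heq : (rowSub W1 S).mulVec (z - zs) = 0 := by
    funext i
    have hiS : x1 i.1 ≠ 0 := by
      have := i.2
      simpa [hS, supp, Set.Finite.mem_toFinset] using this
    have hxs : W1.mulVec zs i.1 = x1 i.1 := by
      by_contra h
      have : x1 i.1 = 0 := by
        simp only [hx1, vrelu] at *
        rcases le_or_gt (W1.mulVec zs i.1) 0 with h' | h'
        · simp [max_eq_right h']
        · exact absurd (max_eq_left h'.le).symm h
      exact hiS this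
    have hxz : W1.mulVec z i.1 = x1 i.1 := by
      have hy : y1 i.1 = x1 i.1 := by rw [hyx]
      by_contra h
      have : y1 i.1 = 0 := by
        simp only [hy1, vrelu] at *
        rcases le_or_gt (W1.mulVec z i.1) 0 with h' | h'
        · simp [max_eq_right h']
        · exact absurd ((max_eq_left h'.le).symm.trans hy) h
      rw [hy] at this
      exact hiS this
    have : (rowSub W1 S).mulVec (z - zs) i = W1.mulVec (z - zs) i.1 := rfl
    rw [this, Matrix.mulVec_sub]
    simp [hxz, hxs]
  have hz : z - zs = 0 := by
    have : (rowSub W1 S).mulVecLin (z - zs) = 0 := heq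
    exact (LinearMap.ker_eq_bot.mp hker) (by simpa using this.trans (map_zero (rowSub W1 S).mulVecLin).symm)
  exact sub_eq_zero.mp hz
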